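/- For a symmetric Kripke model N = (W,R,V) over agents a,b, let N* = (W,R*,V) where R*(a) and R*(b) are the reflexive-transitive closures of R(a), R(b). Suppose N,w ⊨ (⋀_{χ∈μ(φ)} χ) ∧ C_{{a,b}}(⋀_{χ∈μ(φ)} χ), where μ(φ) contains K_i ψ → K_i K_i ψ and K_i ψ → ψ for i ∈ {a,b} and all ψ in cl(φ) extended with common-knowledge formulas over subgroups of {a,b}. Then N* is an S5 model, and for every ψ ∈ cl(φ) and every world u with u = w or u reachable from w by an {a,b}-path in N: N,u ⊨ ψ iff N*,u ⊨ ψ. -/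

import Mathlib

/-- Two-agent epistemic formulas with common knowledge: the agents are `false` (= `a`) and
`true` (= `b`). -/
inductive FormC (P : Type) where
  | atom : P → FormC P
  | bot : FormC P
  | neg : FormC P → FormC P
  | impl : FormC P → FormC P → FormC P
  | K : Bool → FormC P → FormC P
  | Ck : Finset Bool → FormC P → FormC P

/-- Kripke satisfaction; common knowledge via nonempty paths along `⋃_{i∈G} R i`. -/
def ksat {W P : Type} (R : Bool → W → W → Prop) (V : W → P → Prop) : FormC P → W → Prop
  | .atom p, w => V w p
  | .bot, _ => False
  | .neg φ, w => ¬ ksat R V φ w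
  | .impl φ ψ, w => ksat R V φ w → ksat R V ψ w
  | .K i φ, w => ∀ u, R i w u → ksat R V φ u
  | .Ck G φ, w => ∀ u, Relation.TransGen (fun x y => ∃ i ∈ G, R i x y) w u → ksat R V φ u

/-- The subformulas of a formula. -/
def sub {P : Type} : FormC P → List (FormC P)
  | .atom p => [.atom p]
  | .bot => [.bot]
  | .neg φ => .neg φ :: sub φ
  | .impl φ ψ => .impl φ ψ :: (sub φ ++ sub ψ)
  | .K i φ => .K i φ :: sub φ
  | .Ck G φ => .Ck G φ :: sub φ

/-- The closure `cl(φ)`: subformulas, their negations, `⊤` and `⊥`. -/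
def cl {P : Type} (φ : FormC P) : List (FormC P) :=
  sub φ ++ (sub φ).map .neg ++ [.neg .bot, .bot]

/-- The nonempty subgroups of `{a, b}`. -/
def groupsList : List (Finset Bool) := [{false}, {true}, {false, true}]

/-- `cl(φ)` extended with the formulas `C_G χ` for `χ ∈ cl(φ)` and `∅ ≠ G ⊆ {a,b}`. -/
def clC {P : Type} (φ : FormC P) : List (FormC P) :=
  cl φ ++ groupsList.flatMap (fun G => (cl φ).map (.Ck G))

/-- `μ(φ)`: the formulas `K_i ψ → K_i K_i ψ` and `K_i ψ → ψ` for `i ∈ {a,b}` and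
`ψ ∈ cl(φ) ∪ {C_G χ : χ ∈ cl(φ), ∅ ≠ G ⊆ {a,b}}`. -/
def mu {P : Type} (φ : FormC P) : List (FormC P) :=
  [false, true].flatMap fun i =>
    (clC φ).flatMap fun ψ =>
      [.impl (.K i ψ) (.K i (.K i ψ)), .impl (.K i ψ) ψ]

/-- Conjunction, defined from `¬` and `→`. -/
def andF {P : Type} (φ ψ : FormC P) : FormC P := .neg (.impl φ (.neg ψ))

/-- Conjunction of a list of formulas. -/
def conj {P : Type} (l : List (FormC P)) : FormC P := l.foldr andF (.neg .bot)
section Helpers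

variable {P W : Type} {R : Bool → W → W → Prop} {V : W → P → Prop}

lemma ksat_andF {φ ψ : FormC P} {w : W} :
    ksat R V (andF φ ψ) w ↔ ksat R V φ w ∧ ksat R V ψ w := by
  simp only [andF, ksat]
  tauto

lemma ksat_conj {l : List (FormC P)} {w : W} :
    ksat R V (conj l) w ↔ ∀ χ ∈ l, ksat R V χ w := by
  induction l with
  | nil => simp [conj, ksat]
  | cons c l ih =>
    rw [show conj (c :: l) = andF c (conj l) from rfl, ksat_andF, ih]
    simp

lemma mem_sub_self (ψ : FormC P) : ψ ∈ sub ψ := by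
  cases ψ <;> simp [sub]

lemma subF_sub {φ : FormC P} : ∀ ψ ∈ sub φ, sub ψ ⊆ sub φ := by
  induction φ with
  | atom p => intro ψ h; simp [sub] at h; subst h; simp [sub]
  | bot => intro ψ h; simp [sub] at h; subst h; simp [sub]
  | neg χ ih =>
    intro ψ h
    rcases (by simpa [sub] using h : ψ = FormC.neg χ ∨ ψ ∈ sub χ) with rfl | h
    · exact fun x hx => hx
    · exact List.Subset.trans (ih ψ h) (List.subset_cons_self _ _)
  | impl χ₁ χ₂ ih₁ ih₂ =>
    intro ψ h
    rcases (by simpa [sub] using h :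
        ψ = FormC.impl χ₁ χ₂ ∨ ψ ∈ sub χ₁ ∨ ψ ∈ sub χ₂) with rfl | h | h
    · exact fun x hx => hx
    · exact List.Subset.trans (List.Subset.trans (ih₁ ψ h) (List.subset_append_left _ _)) (List.subset_cons_self _ _)
    · exact List.Subset.trans (List.Subset.trans (ih₂ ψ h) (List.subset_append_right _ _)) (List.subset_cons_self _ _)
  | K i χ ih =>
    intro ψ h
    rcases (by simpa [sub] using h : ψ = FormC.K i χ ∨ ψ ∈ sub χ) with rfl | h
    · exact fun x hx => hx
    · exact List.Subset.trans (ih ψ h) (List.subset_cons_self _ _)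
  | Ck G χ ih =>
    intro ψ h
    rcases (by simpa [sub] using h : ψ = FormC.Ck G χ ∨ ψ ∈ sub χ) with rfl | h
    · exact fun x hx => hx
    · exact List.Subset.trans (ih ψ h) (List.subset_cons_self _ _)

lemma subF_subset_cl {φ : FormC P} : sub φ ⊆ cl φ := by
  unfold cl
  exact List.Subset.trans (List.subset_append_left _ _) (List.subset_append_left _ _)

lemma cl_neg {φ χ : FormC P} (h : FormC.neg χ ∈ cl φ) : χ ∈ cl φ := by
  simp only [cl, List.mem_append, List.mem_map, List.mem_cons] at h ⊢
  rcases h with (h | ⟨a, ha, hae⟩) | h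
  · exact Or.inl (Or.inl (subF_sub _ h (by simp [sub, mem_sub_self])))
  · injection hae with h2; subst h2; exact Or.inl (Or.inl ha)
  · simp only [List.mem_singleton, List.not_mem_nil, or_false] at h
    rcases h with h | h
    · injection h with h2; subst h2; simp
    · exact absurd h (by simp)

lemma cl_impl {φ χ₁ χ₂ : FormC P} (h : FormC.impl χ₁ χ₂ ∈ cl φ) :
    χ₁ ∈ cl φ ∧ χ₂ ∈ cl φ := by
  simp only [cl, List.mem_append, List.mem_map, List.mem_cons] at h
  rcases h with (h | ⟨a, ha, hae⟩) | h
  · constructor <;> exact subF_subset_cl (subF_sub _ h (by simp [sub, mem_sub_self]))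
  · exact absurd hae (by simp)
  · exact absurd h (by simp)

lemma cl_K {φ χ : FormC P} {i : Bool} (h : FormC.K i χ ∈ cl φ) : χ ∈ cl φ := by
  simp only [cl, List.mem_append, List.mem_map, List.mem_cons] at h
  rcases h with (h | ⟨a, ha, hae⟩) | h
  · exact subF_subset_cl (subF_sub _ h (by simp [sub, mem_sub_self]))
  · exact absurd hae (by simp)
  · exact absurd h (by simp)

lemma cl_Ck {φ χ : FormC P} {G : Finset Bool} (h : FormC.Ck G χ ∈ cl φ) : χ ∈ cl φ := by
  simp only [cl, List.mem_append, List.mem_map, List.mem_cons] at h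
  rcases h with (h | ⟨a, ha, hae⟩) | h
  · exact subF_subset_cl (subF_sub _ h (by simp [sub, mem_sub_self]))
  · exact absurd hae (by simp)
  · exact absurd h (by simp)

lemma cl_subset_clC {φ : FormC P} : cl φ ⊆ clC φ :=
  List.subset_append_left _ _

lemma bot_mem_cl {φ : FormC P} : (FormC.bot : FormC P) ∈ cl φ := by
  simp [cl]

lemma mem_mu {φ ψ : FormC P} (h : ψ ∈ clC φ) (i : Bool) :
    FormC.impl (.K i ψ) (.K i (.K i ψ)) ∈ mu φ ∧ FormC.impl (.K i ψ) ψ ∈ mu φ := by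
  constructor <;>
  · simp only [mu, List.mem_flatMap, List.mem_cons]
    exact ⟨i, by cases i <;> simp, ψ, h, by simp⟩

lemma main_pres {P W : Type} {R : Bool → W → W → Prop}
    (hsymm : ∀ i, Symmetric (R i)) {V : W → P → Prop} {φ : FormC P}
    {Rch : W → Prop}
    (hRchStep : ∀ (i : Bool) u v, Rch u → R i u v → Rch v)
    (hMu : ∀ u, Rch u → ∀ χ ∈ mu φ, ksat R V χ u) :
    ∀ ψ ∈ cl φ, ∀ u, Rch u →
      (ksat R V ψ u ↔ ksat (fun i => Relation.ReflTransGen (R i)) V ψ u) := by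
  have hRchRTG : ∀ (i : Bool) u v, Rch u → Relation.ReflTransGen (R i) u v → Rch v := by
    intro i u v hu h
    induction h with
    | refl => exact hu
    | tail h1 h2 ih => exact hRchStep _ _ _ ih h2
  have hRchT : ∀ (G : Finset Bool) u v, Rch u →
      Relation.TransGen (fun x y => ∃ j ∈ G, R j x y) u v → Rch v := by
    intro G u v hu h
    induction h with
    | single h => rcases h with ⟨j, _, hst⟩; exact hRchStep _ _ _ hu hst
    | tail _ h2 ih => rcases h2 with ⟨j, _, hst⟩; exact hRchStep _ _ _ ih hst
  have hser : ∀ u, Rch u → ∀ i : Bool, ∃ v, R i u v := by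
    intro u hu i
    have hbot : (FormC.bot : FormC P) ∈ clC φ := cl_subset_clC bot_mem_cl
    have hT := hMu u hu _ (mem_mu hbot i).2
    by_contra hc
    push_neg at hc
    exact hT fun v hv => absurd hv (hc v)
  intro ψ
  induction ψ with
  | atom p => intro _ u _; exact Iff.rfl
  | bot => intro _ u _; exact Iff.rfl
  | neg χ ih =>
    intro hmem u hu
    exact not_congr (ih (cl_neg hmem) u hu)
  | impl χ₁ χ₂ ih₁ ih₂ =>
    intro hmem u hu
    exact imp_congr (ih₁ (cl_impl hmem).1 u hu) (ih₂ (cl_impl hmem).2 u hu)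
  | K i χ ih =>
    intro hmem u hu
    have hχ : χ ∈ cl φ := cl_K hmem
    have hχC : χ ∈ clC φ := cl_subset_clC hχ
    constructor
    · intro h v hv
      have key : ksat R V (.K i χ) v := by
        induction hv with
        | refl => exact h
        | @tail b c h1 h2 ih2 =>
          have hb : Rch b := hRchRTG i u b hu h1
          have h4 := hMu b hb _ (mem_mu hχC i).1
          exact h4 ih2 _ h2
      have hv' : Rch v := hRchRTG i u v hu hv
      have hT := hMu v hv' _ (mem_mu hχC i).2
      exact (ih hχ v hv').mp (hT key)
    · intro h v hv
      exact (ih hχ v (hRchStep i u v hu hv)).mpr (h v (Relation.ReflTransGen.single hv))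
  | Ck G χ ih =>
    intro hmem u hu
    have hχ : χ ∈ cl φ := cl_Ck hmem
    constructor
    · intro h v hv
      have hG : ∃ i, i ∈ G := by
        cases hv with
        | single h1 => obtain ⟨j, hj, -⟩ := h1; exact ⟨j, hj⟩
        | tail _ h2 => obtain ⟨j, hj, -⟩ := h2; exact ⟨j, hj⟩
      have hrt : Relation.ReflTransGen (fun x y => ∃ j ∈ G, R j x y) u v := by
        clear h
        induction hv with
        | single h =>
          rcases h with ⟨j, hj, hst⟩
          exact Relation.ReflTransGen.mono (p := fun x y => ∃ j ∈ G, R j x y) (fun x y h => ⟨j, hj, h⟩) _ _ hst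
        | tail _ h2 ih2 =>
          rcases h2 with ⟨j, hj, hst⟩
          exact ih2.trans (Relation.ReflTransGen.mono (p := fun x y => ∃ j ∈ G, R j x y) (fun x y h => ⟨j, hj, h⟩) _ _ hst)
      rcases hrt.cases_head with rfl | ⟨c, hc, hcb⟩
      · -- v = u : use seriality and symmetry to find a loop
        obtain ⟨i0, hi0⟩ := hG
        obtain ⟨t, ht⟩ := hser u hu i0
        have hloop : Relation.TransGen (fun x y => ∃ j ∈ G, R j x y) u u :=
          Relation.TransGen.head ⟨i0, hi0, ht⟩
            (Relation.TransGen.single ⟨i0, hi0, hsymm i0 ht⟩)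
        exact (ih hχ u hu).mp (h u hloop)
      · have htg : Relation.TransGen (fun x y => ∃ j ∈ G, R j x y) u v :=
          Relation.TransGen.head' hc hcb
        have hv' : Rch v := hRchT G u v hu htg
        exact (ih hχ v hv').mp (h v htg)
    · intro h v hv
      have htg : Relation.TransGen (fun x y => ∃ j ∈ G, Relation.ReflTransGen (R j) x y) u v :=
        Relation.TransGen.mono (p := fun x y => ∃ j ∈ G, Relation.ReflTransGen (R j) x y) (fun x y ⟨j, hj, hr⟩ => ⟨j, hj, Relation.ReflTransGen.single hr⟩) _ _ hv
      have hv' : Rch v := hRchT G u v hu hv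
      exact (ih hχ v hv').mpr (h v htg)

end Helpers

/-- For a symmetric two-agent Kripke model `N = (W,R,V)` satisfying
`(⋀ μ(φ)) ∧ C_{{a,b}} (⋀ μ(φ))` at `w`, the model `N* = (W,R*,V)` whose relations are the
reflexive-transitive closures of those of `N` is an S5 model, and truth of every
`ψ ∈ cl(φ)` is preserved at `w` and at every world reachable from `w` by an `{a,b}`-path. -/
theorem reflexive_transitive_closure_preserves_truth
    (P W : Type) [Nonempty W] (R : Bool → W → W → Prop)
    (hsymm : ∀ i, Symmetric (R i)) (V : W → P → Prop) (w : W) (φ : FormC P)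
    (hsat : ksat R V (andF (conj (mu φ)) (.Ck {false, true} (conj (mu φ)))) w) :
    (∀ i, Reflexive (Relation.ReflTransGen (R i)) ∧
        Symmetric (Relation.ReflTransGen (R i)) ∧
        Transitive (Relation.ReflTransGen (R i))) ∧
    (∀ ψ ∈ cl φ, ∀ u : W,
      (u = w ∨ Relation.TransGen (fun x y => ∃ i : Bool, R i x y) w u) →
      (ksat R V ψ u ↔ ksat (fun i => Relation.ReflTransGen (R i)) V ψ u)) := by
  constructor
  · intro i
    exact ⟨fun x => Relation.ReflTransGen.refl,
      fun a b h => (@Relation.ReflTransGen.stdSymm _ _ ⟨hsymm i⟩).symm a b h,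
      fun a b c h1 h2 => h1.trans h2⟩
  · rw [ksat_andF] at hsat
    obtain ⟨hA, hC⟩ := hsat
    have hrel : (fun x y => ∃ i ∈ ({false, true} : Finset Bool), R i x y) =
        (fun x y => ∃ i : Bool, R i x y) := by
      funext x y
      apply propext
      constructor
      · rintro ⟨i, -, h⟩; exact ⟨i, h⟩
      · rintro ⟨i, h⟩; exact ⟨i, by cases i <;> simp, h⟩
    set Rch : W → Prop :=
      fun u => u = w ∨ Relation.TransGen (fun x y => ∃ i : Bool, R i x y) w u with hRchdef
    have hMu : ∀ u, Rch u → ∀ χ ∈ mu φ, ksat R V χ u := by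
      intro u hu χ hχ
      rcases hu with rfl | hu
      · exact ksat_conj.mp hA χ hχ
      · have := hC u (by rw [show (fun x y => ∃ i ∈ ({false, true} : Finset Bool), R i x y) =
            (fun x y => ∃ i : Bool, R i x y) from hrel]; exact hu)
        exact ksat_conj.mp this χ hχ
    have hRchStep : ∀ (i : Bool) u v, Rch u → R i u v → Rch v := by
      intro i u v hu h
      rcases hu with rfl | hu
      · exact Or.inr (Relation.TransGen.single ⟨i, h⟩)
      · exact Or.inr (hu.tail ⟨i, h⟩)
    exact main_pres hsymm hRchStep hMu
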